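/- Let p₁, p₂, p₃, p₄ be nonzero null vectors in four-dimensional Minkowski space, with p₁ not parallel to any of p₂, p₃, p₄. If dim span{p₂, p₃, p₄} = 2, then exactly one pair among {p₂, p₃, p₄} consists of parallel vectors, and there exists r ∈ V with ⟨p₁|r⟩ ≠ 0 and ⟨pᵢ|r⟩ = 0 for i = 2, 3, 4. -/

import Mathlib

/-- The Minkowski bilinear form of signature (+,-,-,-) on ℝ⁴. -/
def mink (p q : Fin 4 → ℝ) : ℝ :=
  p 0 * q 0 - p 1 * q 1 - p 2 * q 2 - p 3 * q 3

/-- A vector is null if it has zero Minkowski norm. -/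
def IsNull (p : Fin 4 → ℝ) : Prop := mink p p = 0

/-- Two vectors are parallel if one is a scalar multiple of the other. -/
def Par (p q : Fin 4 → ℝ) : Prop := ∃ c : ℝ, q = c • p ∨ p = c • q

/-- A future null vector (time orientation: positive 0th component). -/
def FutureNull (p : Fin 4 → ℝ) : Prop := p ≠ 0 ∧ IsNull p ∧ 0 < p 0

lemma mink_symm (p q : Fin 4 → ℝ) : mink p q = mink q p := by
  unfold mink; ring

lemma mink_comb3 (p x y z : Fin 4 → ℝ) (a b c : ℝ) :
    mink p (a • x + b • y + c • z) = a * mink p x + b * mink p y + c * mink p z := by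
  simp only [mink, Pi.add_apply, Pi.smul_apply, smul_eq_mul]; ring

lemma mink_smul_left (p q : Fin 4 → ℝ) (c : ℝ) : mink (c • p) q = c * mink p q := by
  simp only [mink, Pi.smul_apply, smul_eq_mul]; ring

/-- `mink p ·` as a linear map. -/
def minkL (p : Fin 4 → ℝ) : (Fin 4 → ℝ) →ₗ[ℝ] ℝ where
  toFun q := mink p q
  map_add' x y := by simp only [mink, Pi.add_apply]; ring
  map_smul' c x := by simp only [mink, Pi.smul_apply, smul_eq_mul, RingHom.id_apply]; ring

lemma null_time_ne_zero {p : Fin 4 → ℝ} (hp : p ≠ 0) (hn : IsNull p) : p 0 ≠ 0 := by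
  intro h0
  apply hp
  have hn' : p 0 * p 0 - p 1 * p 1 - p 2 * p 2 - p 3 * p 3 = 0 := hn
  funext i
  fin_cases i
  · exact h0
  · show p 1 = 0; nlinarith [sq_nonneg (p 2), sq_nonneg (p 3), sq_nonneg (p 1)]
  · show p 2 = 0; nlinarith [sq_nonneg (p 1), sq_nonneg (p 3), sq_nonneg (p 2)]
  · show p 3 = 0; nlinarith [sq_nonneg (p 1), sq_nonneg (p 2), sq_nonneg (p 3)]

/-- Null vectors with vanishing inner product are parallel. -/
lemma par_of_mink_eq_zero {p q : Fin 4 → ℝ} (hp : p ≠ 0) (hq : q ≠ 0)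
    (hnp : IsNull p) (hnq : IsNull q) (h : mink p q = 0) : Par p q := by
  have hp0 : p 0 ≠ 0 := null_time_ne_zero hp hnp
  have hq0 : q 0 ≠ 0 := null_time_ne_zero hq hnq
  have hnp' : p 0 * p 0 - p 1 * p 1 - p 2 * p 2 - p 3 * p 3 = 0 := hnp
  have hnq' : q 0 * q 0 - q 1 * q 1 - q 2 * q 2 - q 3 * q 3 = 0 := hnq
  have h' : p 0 * q 0 - p 1 * q 1 - p 2 * q 2 - p 3 * q 3 = 0 := h
  have hS : (q 0 * p 1 - p 0 * q 1)^2 + (q 0 * p 2 - p 0 * q 2)^2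
      + (q 0 * p 3 - p 0 * q 3)^2 = 0 := by
    linear_combination (-(q 0)^2) * hnp' - (p 0)^2 * hnq' + 2 * (p 0) * (q 0) * h'
  have key : q 0 • p = p 0 • q := by
    funext i
    fin_cases i
    · show q 0 * p 0 = p 0 * q 0; ring
    · show q 0 * p 1 = p 0 * q 1
      nlinarith [sq_nonneg (q 0 * p 1 - p 0 * q 1), sq_nonneg (q 0 * p 2 - p 0 * q 2),
        sq_nonneg (q 0 * p 3 - p 0 * q 3)]
    · show q 0 * p 2 = p 0 * q 2
      nlinarith [sq_nonneg (q 0 * p 1 - p 0 * q 1), sq_nonneg (q 0 * p 2 - p 0 * q 2),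
        sq_nonneg (q 0 * p 3 - p 0 * q 3)]
    · show q 0 * p 3 = p 0 * q 3
      nlinarith [sq_nonneg (q 0 * p 1 - p 0 * q 1), sq_nonneg (q 0 * p 2 - p 0 * q 2),
        sq_nonneg (q 0 * p 3 - p 0 * q 3)]
  refine ⟨q 0 / p 0, Or.inl ?_⟩
  funext i
  have := congrFun key i
  simp only [Pi.smul_apply, smul_eq_mul] at this ⊢
  field_simp
  linarith [this]

lemma mink_ne_zero {p q : Fin 4 → ℝ} (hp : p ≠ 0) (hq : q ≠ 0)
    (hnp : IsNull p) (hnq : IsNull q) (h : ¬ Par p q) : mink p q ≠ 0 :=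
  fun h0 => h (par_of_mink_eq_zero hp hq hnp hnq h0)

lemma par_norm {p q : Fin 4 → ℝ} (hp : p ≠ 0) (h : Par p q) : ∃ c : ℝ, q = c • p := by
  rcases h with ⟨c, hc | hc⟩
  · exact ⟨c, hc⟩
  · have hc0 : c ≠ 0 := by rintro rfl; simp at hc; exact hp hc
    exact ⟨c⁻¹, by rw [hc, smul_smul, inv_mul_cancel₀ hc0, one_smul]⟩

lemma par_symm {p q : Fin 4 → ℝ} (h : Par p q) : Par q p := by
  rcases h with ⟨c, hc⟩; exact ⟨c, hc.symm⟩

/-- Key existence lemma: r orthogonal to p₂, p₃ but not to p₁. -/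
lemma exists_r (p₁ p₂ p₃ : Fin 4 → ℝ)
    (hn₁ : IsNull p₁) (hn₂ : IsNull p₂) (hn₃ : IsNull p₃)
    (ha : mink p₁ p₂ ≠ 0) (hb : mink p₁ p₃ ≠ 0) (hc : mink p₂ p₃ ≠ 0) :
    ∃ r : Fin 4 → ℝ, mink p₁ r ≠ 0 ∧ mink p₂ r = 0 ∧ mink p₃ r = 0 := by
  by_contra hcon
  push_neg at hcon
  set a := mink p₁ p₂ with hadef
  set b := mink p₁ p₃ with hbdef
  set c := mink p₂ p₃ with hcdef
  set g : (Fin 4 → ℝ) →ₗ[ℝ] (Fin 3 → ℝ) :=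
    LinearMap.pi (fun i => minkL (![p₁, p₂, p₃] i)) with hg
  set f : (Fin 4 → ℝ) →ₗ[ℝ] (Fin 2 → ℝ) :=
    LinearMap.pi (fun i => minkL (![p₂, p₃] i)) with hf
  have e1 : mink p₁ p₁ = 0 := hn₁
  have e2 : mink p₂ p₂ = 0 := hn₂
  have e3 : mink p₃ p₃ = 0 := hn₃
  have s21 : mink p₂ p₁ = a := by rw [hadef, mink_symm]
  have s31 : mink p₃ p₁ = b := by rw [hbdef, mink_symm]
  have s32 : mink p₃ p₂ = c := by rw [hcdef, mink_symm]
  have hgsurj : Function.Surjective g := by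
    intro v
    refine ⟨((-c * v 0 + b * v 1 + a * v 2) / (2 * a * b)) • p₁ +
      ((c * v 0 - b * v 1 + a * v 2) / (2 * a * c)) • p₂ +
      ((c * v 0 + b * v 1 - a * v 2) / (2 * b * c)) • p₃, ?_⟩
    funext i
    fin_cases i
    · show mink p₁ _ = v 0
      rw [mink_comb3, e1, ← hadef, ← hbdef]; field_simp; ring
    · show mink p₂ _ = v 1
      rw [mink_comb3, s21, e2, ← hcdef]; field_simp; ring
    · show mink p₃ _ = v 2
      rw [mink_comb3, s31, s32, e3]; field_simp; ring
  have hker : LinearMap.ker f ≤ LinearMap.ker g := by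
    intro x hx
    rw [LinearMap.mem_ker] at hx ⊢
    have hx2 : mink p₂ x = 0 := congrFun hx 0
    have hx3 : mink p₃ x = 0 := congrFun hx 1
    have hx1 : mink p₁ x = 0 := by
      by_contra hne
      exact hcon x hne hx2 hx3
    funext i
    fin_cases i
    · exact hx1
    · exact hx2
    · exact hx3
  have hrk_g : Module.finrank ℝ (LinearMap.range g) + Module.finrank ℝ (LinearMap.ker g) = 4 := by
    have := LinearMap.finrank_range_add_finrank_ker g
    simpa [Module.finrank_fin_fun] using this
  have hrange_g : Module.finrank ℝ (LinearMap.range g) = 3 := by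
    rw [LinearMap.range_eq_top.mpr hgsurj]
    simp [Module.finrank_fin_fun]
  have hkg : Module.finrank ℝ (LinearMap.ker g) = 1 := by omega
  have hrk_f : Module.finrank ℝ (LinearMap.range f) + Module.finrank ℝ (LinearMap.ker f) = 4 := by
    have := LinearMap.finrank_range_add_finrank_ker f
    simpa [Module.finrank_fin_fun] using this
  have hrange_f : Module.finrank ℝ (LinearMap.range f) ≤ 2 := by
    have := Submodule.finrank_le (LinearMap.range f)
    simpa [Module.finrank_fin_fun] using this
  have hkf : 2 ≤ Module.finrank ℝ (LinearMap.ker f) := by omega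
  have := Submodule.finrank_mono hker
  omega

theorem case_b
    (p₁ p₂ p₃ p₄ : Fin 4 → ℝ)
    (h₁ : p₁ ≠ 0) (h₂ : p₂ ≠ 0) (h₃ : p₃ ≠ 0) (h₄ : p₄ ≠ 0)
    (hn₁ : IsNull p₁) (hn₂ : IsNull p₂) (hn₃ : IsNull p₃) (hn₄ : IsNull p₄)
    (h₁₂ : ¬ Par p₁ p₂) (h₁₃ : ¬ Par p₁ p₃) (h₁₄ : ¬ Par p₁ p₄)
    (hdim : Module.finrank ℝ (Submodule.span ℝ ({p₂, p₃, p₄} : Set (Fin 4 → ℝ))) = 2) :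
    ((Par p₂ p₃ ∧ ¬ Par p₂ p₄ ∧ ¬ Par p₃ p₄) ∨
     (Par p₂ p₄ ∧ ¬ Par p₂ p₃ ∧ ¬ Par p₃ p₄) ∨
     (Par p₃ p₄ ∧ ¬ Par p₂ p₃ ∧ ¬ Par p₂ p₄)) ∧
    ∃ r : Fin 4 → ℝ,
      mink p₁ r ≠ 0 ∧ mink p₂ r = 0 ∧ mink p₃ r = 0 ∧ mink p₄ r = 0 := by
  -- If all of p₂, p₃, p₄ lie in a line, the span has rank ≤ 1, contradiction.
  have hline : ∀ v : Fin 4 → ℝ, v ≠ 0 →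
      (∃ c : ℝ, p₂ = c • v) → (∃ c : ℝ, p₃ = c • v) → (∃ c : ℝ, p₄ = c • v) → False := by
    rintro v hv ⟨c2, hc2⟩ ⟨c3, hc3⟩ ⟨c4, hc4⟩
    have hle : Submodule.span ℝ ({p₂, p₃, p₄} : Set (Fin 4 → ℝ)) ≤
        Submodule.span ℝ ({v} : Set (Fin 4 → ℝ)) := by
      rw [Submodule.span_le]
      rintro x (rfl | rfl | rfl)
      · exact Submodule.mem_span_singleton.mpr ⟨c2, hc2.symm⟩
      · exact Submodule.mem_span_singleton.mpr ⟨c3, hc3.symm⟩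
      · exact Submodule.mem_span_singleton.mpr ⟨c4, hc4.symm⟩
    have h1 : Module.finrank ℝ (Submodule.span ℝ ({v} : Set (Fin 4 → ℝ))) = 1 :=
      finrank_span_singleton hv
    have := Submodule.finrank_mono hle
    omega
  -- At least one pair is parallel.
  have key : Par p₂ p₃ ∨ Par p₂ p₄ ∨ Par p₃ p₄ := by
    by_contra hcon
    push_neg at hcon
    obtain ⟨h23, h24, h34⟩ := hcon
    have u := mink_ne_zero h₂ h₃ hn₂ hn₃ h23
    have v := mink_ne_zero h₂ h₄ hn₂ hn₄ h24
    have w := mink_ne_zero h₃ h₄ hn₃ hn₄ h34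
    -- the three vectors are dependent since the span has rank 2 < 3
    have hdep : ¬ LinearIndependent ℝ ![p₂, p₃, p₄] := by
      intro hind
      have hr : Set.range ![p₂, p₃, p₄] = ({p₂, p₃, p₄} : Set (Fin 4 → ℝ)) := by
        ext x
        simp [Fin.exists_fin_succ]
        tauto
      have := finrank_span_eq_card hind
      rw [hr] at this
      simp [hdim] at this
    rw [Fintype.not_linearIndependent_iff] at hdep
    obtain ⟨gc, hsum, i₀, hi₀⟩ := hdep
    have hsum' : gc 0 • p₂ + gc 1 • p₃ + gc 2 • p₄ = 0 := by
      have : ∑ i : Fin 3, gc i • ![p₂, p₃, p₄] i =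
          gc 0 • p₂ + gc 1 • p₃ + gc 2 • p₄ := by
        simp [Fin.sum_univ_three]
      rw [this] at hsum
      exact hsum
    set A := gc 0; set B := gc 1; set C := gc 2
    have e2 : B * mink p₂ p₃ + C * mink p₂ p₄ = 0 := by
      have := mink_comb3 p₂ p₂ p₃ p₄ A B C
      rw [hsum'] at this
      have hz : mink p₂ (0 : Fin 4 → ℝ) = 0 := by simp [mink]
      rw [hz] at this
      have hn2 : mink p₂ p₂ = 0 := hn₂
      rw [hn2] at this
      linarith
    have e3 : A * mink p₂ p₃ + C * mink p₃ p₄ = 0 := by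
      have := mink_comb3 p₃ p₂ p₃ p₄ A B C
      rw [hsum'] at this
      have hz : mink p₃ (0 : Fin 4 → ℝ) = 0 := by simp [mink]
      rw [hz] at this
      have hn3 : mink p₃ p₃ = 0 := hn₃
      rw [mink_symm p₃ p₂, hn3] at this
      linarith
    have e4 : A * mink p₂ p₄ + B * mink p₃ p₄ = 0 := by
      have := mink_comb3 p₄ p₂ p₃ p₄ A B C
      rw [hsum'] at this
      have hz : mink p₄ (0 : Fin 4 → ℝ) = 0 := by simp [mink]
      rw [hz] at this
      have hn4 : mink p₄ p₄ = 0 := hn₄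
      rw [mink_symm p₄ p₂, mink_symm p₄ p₃, hn4] at this
      linarith
    set u' := mink p₂ p₃; set v' := mink p₂ p₄; set w' := mink p₃ p₄
    have hC : C * (v' * w') * 2 = 0 := by linear_combination v' * e3 + w' * e2 - u' * e4
    have hC0 : C = 0 := by
      rcases mul_eq_zero.mp hC with h | h
      · rcases mul_eq_zero.mp h with h | h
        · exact h
        · exact absurd h (mul_ne_zero v w)
      · norm_num at h
    have hB0 : B = 0 := by
      have := e2; rw [hC0] at this; simp at this
      rcases this with h | h
      · exact h
      · exact absurd h u
    have hA0 : A = 0 := by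
      have := e3; rw [hC0] at this; simp at this
      rcases this with h | h
      · exact h
      · exact absurd h u
    fin_cases i₀ <;> [exact hi₀ hA0; exact hi₀ hB0; exact hi₀ hC0]
  -- No two pairs are both parallel.
  have h23_24 : Par p₂ p₃ → Par p₂ p₄ → False := fun hA hB =>
    hline p₂ h₂ ⟨1, (one_smul ℝ p₂).symm⟩ (par_norm h₂ hA) (par_norm h₂ hB)
  have h23_34 : Par p₂ p₃ → Par p₃ p₄ → False := fun hA hB =>
    hline p₃ h₃ (par_norm h₃ (par_symm hA)) ⟨1, (one_smul ℝ p₃).symm⟩ (par_norm h₃ hB)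
  have h24_34 : Par p₂ p₄ → Par p₃ p₄ → False := fun hA hB =>
    hline p₄ h₄ (par_norm h₄ (par_symm hA)) (par_norm h₄ (par_symm hB))
      ⟨1, (one_smul ℝ p₄).symm⟩
  rcases key with h | h | h
  · refine ⟨Or.inl ⟨h, fun hx => h23_24 h hx, fun hx => h23_34 h hx⟩, ?_⟩
    obtain ⟨r, hr1, hr2, hr4⟩ := exists_r p₁ p₂ p₄ hn₁ hn₂ hn₄
      (mink_ne_zero h₁ h₂ hn₁ hn₂ h₁₂) (mink_ne_zero h₁ h₄ hn₁ hn₄ h₁₄)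
      (mink_ne_zero h₂ h₄ hn₂ hn₄ (fun hx => h23_24 h hx))
    obtain ⟨cc, hcc⟩ := par_norm h₂ h
    exact ⟨r, hr1, hr2, by rw [hcc, mink_smul_left, hr2, mul_zero], hr4⟩
  · refine ⟨Or.inr (Or.inl ⟨h, fun hx => h23_24 hx h, fun hx => h24_34 h hx⟩), ?_⟩
    obtain ⟨r, hr1, hr2, hr3⟩ := exists_r p₁ p₂ p₃ hn₁ hn₂ hn₃
      (mink_ne_zero h₁ h₂ hn₁ hn₂ h₁₂) (mink_ne_zero h₁ h₃ hn₁ hn₃ h₁₃)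
      (mink_ne_zero h₂ h₃ hn₂ hn₃ (fun hx => h23_24 hx h))
    obtain ⟨cc, hcc⟩ := par_norm h₂ h
    exact ⟨r, hr1, hr2, hr3, by rw [hcc, mink_smul_left, hr2, mul_zero]⟩
  · refine ⟨Or.inr (Or.inr ⟨h, fun hx => h23_34 hx h, fun hx => h24_34 hx h⟩), ?_⟩
    obtain ⟨r, hr1, hr2, hr3⟩ := exists_r p₁ p₂ p₃ hn₁ hn₂ hn₃
      (mink_ne_zero h₁ h₂ hn₁ hn₂ h₁₂) (mink_ne_zero h₁ h₃ hn₁ hn₃ h₁₃)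
      (mink_ne_zero h₂ h₃ hn₂ hn₃ (fun hx => h23_34 hx h))
    obtain ⟨cc, hcc⟩ := par_norm h₃ h
    exact ⟨r, hr1, hr2, hr3, by rw [hcc, mink_smul_left, hr3, mul_zero]⟩
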